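/- Let F : [1,∞) → (0,∞) be differentiable and nondecreasing, and suppose there are constants C > 0 and 0 < α ≤ 1/2 such that α F(r) ≤ C F'(r)^{(3+α)/(4+α)} · r^{3/(4+α)} for all r ≥ 1. Then integrating the resulting differential inequality (−F(r)^{−1/(3+α)})' ≥ c α^{(7+2α)/(3+α)} (r^{α/(3+α)})' (for an appropriate constant c > 0 depending on C) over [1,b] and letting b → ∞ yields a contradiction; hence no such positive F exists. Formally: there is no differentiable nondecreasing F : [1,∞) → (0,∞) satisfying α F(r) ≤ C F'(r)^{(3+α)/(4+α)} r^{3/(4+α)} for all r ≥ 1. -/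

import Mathlib

/-- There is no positive nondecreasing differentiable `F` on `[1,∞)` satisfying
`α F(r) ≤ C F'(r)^{(3+α)/(4+α)} r^{3/(4+α)}` with `0 < α ≤ 1/2`. -/
theorem stmt_18 (C α : ℝ) (hC : 0 < C) (hα : 0 < α) (hα' : α ≤ 1 / 2)
    (F F' : ℝ → ℝ)
    (hFpos : ∀ r ≥ (1 : ℝ), 0 < F r)
    (hF' : ∀ r ≥ (1 : ℝ), HasDerivAt F (F' r) r)
    (hmono : ∀ r ≥ (1 : ℝ), 0 ≤ F' r)
    (hineq : ∀ r ≥ (1 : ℝ),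
      α * F r ≤ C * (F' r) ^ ((3 + α) / (4 + α)) * r ^ ((3 : ℝ) / (4 + α))) :
    False := by
  have h3 : (0:ℝ) < 3 + α := by linarith
  have h4 : (0:ℝ) < 4 + α := by linarith
  set p : ℝ := (3 + α) / (4 + α) with hp
  set q : ℝ := (4 + α) / (3 + α) with hq
  have hqpos : 0 < q := div_pos h4 h3
  have hpq : p * q = 1 := by rw [hp, hq]; field_simp
  set s : ℝ := 3 / (3 + α) with hs
  set e : ℝ := -(1 / (3 + α)) with he
  have he1 : e - 1 = -q := by
    rw [he, hq]
    field_simp [h3.ne']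
    ring
  set K : ℝ := (α / C) ^ q * (1 / (3 + α)) with hK
  have hKpos : 0 < K := by
    apply mul_pos (Real.rpow_pos_of_pos (div_pos hα hC) q)
    positivity
  set β : ℝ := α / (3 + α) with hβ
  have hβpos : 0 < β := div_pos hα h3
  have hβ1 : β - 1 = -s := by
    rw [hβ, hs]
    field_simp [h3.ne']
    ring
  set M : ℝ := K * ((3 + α) / α) with hM
  have hMpos : 0 < M := mul_pos hKpos (by positivity)
  set φ : ℝ → ℝ := fun r => M * r ^ β with hφ
  set G : ℝ → ℝ := fun r => -(F r ^ e) with hG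
  set ψ : ℝ → ℝ := fun r => G r - φ r with hψ
  -- key pointwise derivative bound
  have hkey : ∀ r ≥ (1:ℝ), K * r ^ (-s) ≤ F' r * (-e) * F r ^ (e - 1) := by
    intro r hr
    have hr0 : (0:ℝ) < r := lt_of_lt_of_le one_pos hr
    have hF0 : 0 < F r := hFpos r hr
    have hF'0 : 0 ≤ F' r := hmono r hr
    have h1 := hineq r hr
    have h2 : (α * F r) ^ q ≤ (C * F' r ^ p * r ^ ((3:ℝ)/(4+α))) ^ q :=
      Real.rpow_le_rpow (by positivity) h1 hqpos.le
    rw [Real.mul_rpow hα.le hF0.le, Real.mul_rpow (by positivity) (by positivity),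
      Real.mul_rpow hC.le (by positivity), ← Real.rpow_mul hF'0, hpq, Real.rpow_one,
      ← Real.rpow_mul hr0.le] at h2
    have h3q : (3:ℝ)/(4+α) * q = s := by rw [hq, hs]; field_simp
    rw [h3q] at h2
    -- h2 : α^q * F r ^ q ≤ C^q * F' r * r ^ s
    have hCq : 0 < C ^ q := Real.rpow_pos_of_pos hC q
    have hrs : 0 < r ^ s := Real.rpow_pos_of_pos hr0 s
    have hFq : 0 < F r ^ q := Real.rpow_pos_of_pos hF0 q
    have hdiv : α ^ q * F r ^ q / (C ^ q * r ^ s) ≤ F' r := by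
      rw [div_le_iff₀ (by positivity)]
      calc α ^ q * F r ^ q ≤ C ^ q * F' r * r ^ s := h2
        _ = F' r * (C ^ q * r ^ s) := by ring
    have hFne : F r ^ e ≠ 0 := ne_of_gt (Real.rpow_pos_of_pos hF0 e)
    have hmul : (α / C) ^ q * r ^ (-s) * F r ^ q ≤ F' r := by
      rw [Real.div_rpow hα.le hC.le, Real.rpow_neg hr0.le]
      calc α ^ q / C ^ q * (r ^ s)⁻¹ * F r ^ q
          = α ^ q * F r ^ q / (C ^ q * r ^ s) := by field_simp
        _ ≤ F' r := hdiv
    have hne : (-e) = 1 / (3 + α) := by rw [he]; ring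
    rw [he1]
    have hFnq : F r ^ (-q) = (F r ^ q)⁻¹ := Real.rpow_neg hF0.le q
    calc K * r ^ (-s)
        = ((α / C) ^ q * r ^ (-s) * F r ^ q * (F r ^ q)⁻¹) * (1 / (3 + α)) := by
          rw [hK]; field_simp
      _ ≤ (F' r * (F r ^ q)⁻¹) * (1 / (3 + α)) := by
          have h5 : (α / C) ^ q * r ^ (-s) * F r ^ q * (F r ^ q)⁻¹ ≤ F' r * (F r ^ q)⁻¹ :=
            mul_le_mul_of_nonneg_right hmul (by positivity)
          apply mul_le_mul_of_nonneg_right h5 (by positivity)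
      _ = F' r * (-e) * F r ^ (-q) := by rw [hFnq, hne]; ring
  have hGd : ∀ r ≥ (1:ℝ), HasDerivAt G (F' r * (-e) * F r ^ (e - 1)) r := by
    intro r hr
    have hF0 := hFpos r hr
    have h := ((hF' r hr).rpow_const (p := e) (Or.inl hF0.ne')).neg
    refine h.congr_deriv ?_
    ring
  have hφd : ∀ r ≥ (1:ℝ), HasDerivAt φ (K * r ^ (-s)) r := by
    intro r hr
    have hr0 : (0:ℝ) < r := lt_of_lt_of_le one_pos hr
    have h := (Real.hasDerivAt_rpow_const (x := r) (p := β) (Or.inl hr0.ne')).const_mul M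
    refine h.congr_deriv ?_
    rw [hβ1, hM, hβ]
    field_simp
  have hψd : ∀ r ≥ (1:ℝ), HasDerivAt ψ (F' r * (-e) * F r ^ (e - 1) - K * r ^ (-s)) r :=
    fun r hr => (hGd r hr).sub (hφd r hr)
  have hmonoψ : MonotoneOn ψ (Set.Ici 1) := by
    apply monotoneOn_of_deriv_nonneg (convex_Ici 1)
    · intro r hr
      exact (hψd r hr).continuousAt.continuousWithinAt
    · intro r hr
      rw [interior_Ici] at hr
      exact (hψd r hr.le).differentiableAt.differentiableWithinAt
    · intro r hr
      rw [interior_Ici] at hr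
      rw [(hψd r hr.le).deriv]
      have := hkey r hr.le
      linarith
  have htend : Filter.Tendsto φ Filter.atTop Filter.atTop := by
    rw [hφ]
    exact Filter.Tendsto.const_mul_atTop hMpos (tendsto_rpow_atTop hβpos)
  obtain ⟨b, hb1, hb2⟩ :=
    ((htend.eventually_ge_atTop (φ 1 - G 1 + 1)).and (Filter.eventually_ge_atTop (1:ℝ))).exists
  have hψb : ψ 1 ≤ ψ b := hmonoψ (Set.mem_Ici.2 le_rfl) (Set.mem_Ici.2 hb2) hb2
  have hGb : G b < 0 := by
    rw [hG]
    simp only [neg_neg, neg_lt, neg_zero]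
    exact Real.rpow_pos_of_pos (hFpos b hb2) e
  rw [hψ] at hψb
  simp only at hψb
  linarith
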